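/- With F(β, λ) = -(β⟨P_c, λ⟩ + (1-β)W(λ))·Vol(Δ) as above: (i) if β < R then F(β,λ) < 0 for all λ ≠ 0; (ii) if β = R then F(β,λ) ≤ 0 for all λ, with equality iff the supporting hyperplane H_λ of Δ contains Q; (iii) if β > R then there exists λ with F(β,λ) > 0. -/

import Mathlib

open scoped RealInnerProductSpace

/-- Main theorem in combinatorial form. With
`F(β,λ) = -(β⟨P_c,λ⟩ + (1-β)W(λ))·Vol(Δ)`:
(i) if `β < R` then `F(β,λ) < 0` for all `λ ≠ 0`;
(ii) if `β = R` then `F(β,λ) ≤ 0` for all `λ`, with equality iff the supporting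
hyperplane `H_λ` contains `Q`;
(iii) if `β > R` then there exists `λ` with `F(β,λ) > 0`. -/
theorem stmt9 {n : ℕ} (Δ : Set (EuclideanSpace ℝ (Fin n)))
    (hcomp : IsCompact Δ) (hconv : Convex ℝ Δ)
    (h0 : (0 : EuclideanSpace ℝ (Fin n)) ∈ interior Δ)
    (vol : ℝ) (hvol : 0 < vol)
    (Pc : EuclideanSpace ℝ (Fin n)) (hPc : Pc ∈ Δ) (hPc0 : Pc ≠ 0)
    (R : ℝ) (hR : R ∈ Set.Ioo (0:ℝ) 1)
    (hQ : (-(R / (1 - R))) • Pc ∈ frontier Δ)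
    (W : EuclideanSpace ℝ (Fin n) → ℝ)
    (hW : ∀ lam, IsGreatest ((fun p => ⟪p, lam⟫) '' Δ) (W lam))
    (F : ℝ → EuclideanSpace ℝ (Fin n) → ℝ)
    (hF : ∀ β lam, F β lam = -(β * ⟪Pc, lam⟫ + (1 - β) * W lam) * vol)
    (β : ℝ) (hβ : β ∈ Set.Ioo (0:ℝ) 1) :
    (β < R → ∀ lam : EuclideanSpace ℝ (Fin n), lam ≠ 0 → F β lam < 0) ∧
    (β = R → ∀ lam : EuclideanSpace ℝ (Fin n),
      F β lam ≤ 0 ∧ (F β lam = 0 ↔ ⟪(-(R / (1 - R))) • Pc, lam⟫ = W lam)) ∧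
    (R < β → ∃ lam : EuclideanSpace ℝ (Fin n), 0 < F β lam) := by
  obtain ⟨hR0, hR1⟩ := hR
  obtain ⟨hβ0, hβ1⟩ := hβ
  have h1R : (0:ℝ) < 1 - R := by linarith
  set Q : EuclideanSpace ℝ (Fin n) := (-(R / (1 - R))) • Pc with hQdef
  have hQmem : Q ∈ Δ := hcomp.isClosed.frontier_subset hQ
  have hWub : ∀ lam, ∀ p ∈ Δ, ⟪p, lam⟫ ≤ W lam := fun lam p hp => (hW lam).2 ⟨p, hp, rfl⟩
  have hQinner : ∀ lam : EuclideanSpace ℝ (Fin n),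
      ⟪Q, lam⟫ = (-(R/(1-R))) * ⟪Pc, lam⟫ := fun lam => real_inner_smul_left _ _ _
  have hkey : ∀ lam, -(R * ⟪Pc, lam⟫) ≤ (1 - R) * W lam := by
    intro lam
    have h := hWub lam Q hQmem
    rw [hQinner] at h
    have h2 : (1-R) * ((-(R/(1-R))) * ⟪Pc, lam⟫) = -(R * ⟪Pc, lam⟫) := by
      field_simp
    nlinarith [mul_le_mul_of_nonneg_left h h1R.le]
  have hWpos : ∀ lam : EuclideanSpace ℝ (Fin n), lam ≠ 0 → 0 < W lam := by
    intro lam hlam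
    obtain ⟨ε, hε, hball⟩ := Metric.mem_nhds_iff.1 (mem_interior_iff_mem_nhds.1 h0)
    have hnl : (0:ℝ) < ‖lam‖ := norm_pos_iff.2 hlam
    have hc : (0:ℝ) < (ε/2)/‖lam‖ := div_pos (half_pos hε) hnl
    set p : EuclideanSpace ℝ (Fin n) := ((ε/2)/‖lam‖) • lam with hpdef
    have hpΔ : p ∈ Δ := by
      apply hball
      rw [Metric.mem_ball, dist_zero_right, hpdef, norm_smul, Real.norm_eq_abs,
        abs_of_pos hc, div_mul_cancel₀]
      · linarith
      · exact hnl.ne'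
    have hip : ⟪p, lam⟫ = ((ε/2)/‖lam‖) * ‖lam‖^2 := by
      rw [hpdef, real_inner_smul_left, real_inner_self_eq_norm_sq]
    have : (0:ℝ) < ⟪p, lam⟫ := by
      rw [hip]; positivity
    exact lt_of_lt_of_le this (hWub lam p hpΔ)
  refine ⟨?_, ?_, ?_⟩
  · -- (i) β < R
    intro hβR lam hlam
    rw [hF]
    have hw := hWpos lam hlam
    have hk := hkey lam
    have hE : 0 < β * ⟪Pc, lam⟫ + (1-β) * W lam := by
      nlinarith [mul_le_mul_of_nonneg_left hk hβ0.le, mul_pos hw (sub_pos.2 hβR),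
        mul_pos hR0 hw]
    nlinarith [mul_pos hE hvol]
  · -- (ii) β = R
    intro hβR lam
    subst hβR
    have hq := hWub lam Q hQmem
    have ha : (1-β) * ((-(β/(1-β))) * ⟪Pc, lam⟫) = -(β * ⟪Pc, lam⟫) := by
      field_simp
    have hEeq : -(β * ⟪Pc, lam⟫ + (1-β) * W lam) * vol
        = -((1-β) * (W lam - ⟪Q, lam⟫)) * vol := by
      rw [hQinner]
      linear_combination (-vol) * ha
    constructor
    · rw [hF, hEeq]
      nlinarith [mul_nonneg (mul_nonneg h1R.le (sub_nonneg.2 hq)) hvol.le]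
    · rw [hF, hEeq]
      constructor
      · intro h
        have h1 : -((1-β) * (W lam - ⟪Q, lam⟫)) = 0 := by
          rcases mul_eq_zero.1 h with h' | h'
          · exact h'
          · exact absurd h' hvol.ne'
        have h2 : (1-β) * (W lam - ⟪Q, lam⟫) = 0 := by linarith
        rcases mul_eq_zero.1 h2 with h' | h'
        · exact absurd h' h1R.ne'
        · have : W lam = ⟪Q, lam⟫ := by linarith
          exact this.symm
      · intro h
        rw [h]
        ring
  · -- (iii) R < β
    intro hRβ
    have hQni : Q ∉ interior Δ := by
      rw [hcomp.isClosed.frontier_eq] at hQ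
      exact hQ.2
    obtain ⟨f, hf⟩ := geometric_hahn_banach_open_point hconv.interior isOpen_interior hQni
    have hu0 : (0:ℝ) < f Q := by
      have := hf 0 h0
      simpa using this
    have hfΔ : ∀ p ∈ Δ, f p ≤ f Q := by
      intro p hp
      by_contra hlt
      push_neg at hlt
      have hfp : 0 < f p := lt_trans hu0 hlt
      set t : ℝ := f Q / f p with htdef
      have ht0 : 0 < t := div_pos hu0 hfp
      have ht1 : t < 1 := (div_lt_one hfp).2 hlt
      have hmem : (1-t) • (0 : EuclideanSpace ℝ (Fin n)) + t • p ∈ interior Δ :=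
        hconv.combo_interior_self_mem_interior h0 hp (by linarith) ht0.le (by ring)
      have := hf _ hmem
      rw [smul_zero, zero_add, map_smul] at this
      simp only [smul_eq_mul, htdef] at this
      rw [div_mul_cancel₀ _ hfp.ne'] at this
      exact lt_irrefl _ this
    set lam : EuclideanSpace ℝ (Fin n) := (InnerProductSpace.toDual ℝ _).symm f with hlamdef
    have hflam : ∀ x : EuclideanSpace ℝ (Fin n), ⟪x, lam⟫ = f x := by
      intro x
      rw [real_inner_comm]
      exact InnerProductSpace.toDual_symm_apply
    have hWlam : W lam = ⟪Q, lam⟫ := by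
      apply le_antisymm
      · obtain ⟨p, hp, hpe⟩ := (hW lam).1
        have hpe' : W lam = ⟪p, lam⟫ := hpe.symm
        rw [hpe', hflam, hflam]
        exact hfΔ p hp
      · exact hWub lam Q hQmem
    have hwpos : 0 < W lam := by rw [hWlam, hflam]; exact hu0
    refine ⟨lam, ?_⟩
    rw [hF]
    have hqx : (1-R) * W lam = -(R * ⟪Pc, lam⟫) := by
      rw [hWlam, hQinner]
      field_simp
    have hx : ⟪Pc, lam⟫ < 0 := by nlinarith [mul_pos h1R hwpos]
    have hE : β * ⟪Pc, lam⟫ + (1-β) * W lam < 0 := by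
      nlinarith [mul_pos (sub_pos.2 hRβ) (neg_pos.2 hx), mul_pos h1R hwpos]
    nlinarith [mul_pos (neg_pos.2 hE) hvol]
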